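/- Let ν and ρ be probability measures such that under ν the array (Q_{ℓ,ℓ'})_{ℓ≠ℓ'} is exchangeable with each Q_{ℓ,ℓ'} distributed as ρ, and suppose the Ghirlanda–Guerra-type identity E[1_{Q_{ℓ,n+1} ∉ A}·F] = (1/n)ρ(Aᶜ)E[F] + (1/n)Σ_{ℓ'≤n, ℓ'≠ℓ} E[1_{Q_{ℓ,ℓ'} ∉ A}·F] holds for all measurable A ⊆ [0,1] and all bounded measurable functions F of (Q_{ℓ,ℓ'})_{ℓ≠ℓ'≤n}. Then for every measurable A and every n ≥ 2, ν(Q_{ℓ,ℓ'} ∈ A for all ℓ ≠ ℓ' ≤ n) ≥ ρ(A)^n. -/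

import Mathlib

open MeasureTheory Finset

theorem GG_identity_lower_bound
    {Ω : Type*} [MeasureSpace Ω] [IsProbabilityMeasure (volume : Measure Ω)]
    (Q : ℕ → ℕ → Ω → ℝ) (hmeas : ∀ ℓ ℓ', Measurable (Q ℓ ℓ'))
    (hrange : ∀ ℓ ℓ' ω, Q ℓ ℓ' ω ∈ Set.Icc (0 : ℝ) 1)
    (hsymm : ∀ ℓ ℓ', Q ℓ ℓ' = Q ℓ' ℓ)
    (ρ : Measure ℝ) [IsProbabilityMeasure ρ]
    (hmarg : ∀ ℓ ℓ', ℓ ≠ ℓ' → Measure.map (Q ℓ ℓ') volume = ρ)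
    (hGG : ∀ n : ℕ, 1 ≤ n → ∀ ℓ, ℓ < n → ∀ A : Set ℝ, MeasurableSet A →
      ∀ F : Ω → ℝ, Measurable F → (∃ C, ∀ ω, |F ω| ≤ C) →
      (∃ G : (ℕ → ℕ → ℝ) → ℝ,
        F = fun ω => G (fun i j => if i < n ∧ j < n then Q i j ω else 0)) →
      ∫ ω, Set.indicator Aᶜ (fun _ => (1 : ℝ)) (Q ℓ n ω) * F ω =
        (1 / n) * (ρ Aᶜ).toReal * (∫ ω, F ω) +
        (1 / n) * ∑ ℓ' ∈ Finset.range n, (if ℓ' = ℓ then 0 else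
          ∫ ω, Set.indicator Aᶜ (fun _ => (1 : ℝ)) (Q ℓ ℓ' ω) * F ω)) :
    ∀ A : Set ℝ, MeasurableSet A → ∀ n : ℕ, 2 ≤ n →
      (ρ A) ^ n ≤ volume {ω | ∀ ℓ, ℓ < n → ∀ ℓ', ℓ' < n → ℓ ≠ ℓ' → Q ℓ ℓ' ω ∈ A} := by
  classical
  intro A hA
  set μ : Measure Ω := volume with hμ
  set S : ℕ → Set Ω := fun n => {ω | ∀ ℓ, ℓ < n → ∀ ℓ', ℓ' < n → ℓ ≠ ℓ' → Q ℓ ℓ' ω ∈ A}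
    with hS
  -- measurability of S n
  have hSmeas : ∀ n, MeasurableSet (S n) := by
    intro n
    have hEq : S n = ⋂ ℓ, ⋂ ℓ', {ω | ℓ < n → ℓ' < n → ℓ ≠ ℓ' → Q ℓ ℓ' ω ∈ A} := by
      ext ω; simp only [hS, Set.mem_setOf_eq, Set.mem_iInter]; tauto
    rw [hEq]
    refine MeasurableSet.iInter fun ℓ => MeasurableSet.iInter fun ℓ' => ?_
    by_cases h : ℓ < n ∧ ℓ' < n ∧ ℓ ≠ ℓ'
    · have : {ω | ℓ < n → ℓ' < n → ℓ ≠ ℓ' → Q ℓ ℓ' ω ∈ A} = (Q ℓ ℓ') ⁻¹' A := by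
        ext ω; simp [h.1, h.2.1, h.2.2]
      rw [this]; exact (hmeas ℓ ℓ') hA
    · have : {ω | ℓ < n → ℓ' < n → ℓ ≠ ℓ' → Q ℓ ℓ' ω ∈ A} = Set.univ := by
        ext ω; simp only [Set.mem_setOf_eq, Set.mem_univ, iff_true]
        intro h1 h2 h3; exact absurd ⟨h1, h2, h3⟩ h
      rw [this]; exact MeasurableSet.univ
  -- base case : μ (S 2) = ρ A
  have hbase : μ (S 2) = ρ A := by
    have hEq : S 2 = (Q 0 1) ⁻¹' A := by
      ext ω
      constructor
      · intro h; exact h 0 (by norm_num) 1 (by norm_num) (by norm_num)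
      · intro h ℓ hℓ ℓ' hℓ' hne
        have hcases : (ℓ = 0 ∧ ℓ' = 1) ∨ (ℓ = 1 ∧ ℓ' = 0) := by omega
        rcases hcases with ⟨rfl, rfl⟩ | ⟨rfl, rfl⟩
        · exact h
        · rw [hsymm]; exact h
    rw [hEq, ← Measure.map_apply (hmeas 0 1) hA, hmarg 0 1 (by norm_num)]
  -- induction step in reals
  have hstep : ∀ n : ℕ, 2 ≤ n →
      (ρ A).toReal * (μ (S n)).toReal ≤ (μ (S (n + 1))).toReal := by
    intro n hn
    -- apply GG with F = indicator of S n
    set F : Ω → ℝ := Set.indicator (S n) (fun _ => (1 : ℝ)) with hF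
    have hFmeas : Measurable F := (measurable_const (a := (1:ℝ))).indicator (hSmeas n)
    have hFbd : ∃ C, ∀ ω, |F ω| ≤ C := by
      refine ⟨1, fun ω => ?_⟩
      unfold F
      by_cases h : ω ∈ S n <;> simp [Set.indicator_apply, h]
    have hFfac : ∃ G : (ℕ → ℕ → ℝ) → ℝ,
        F = fun ω => G (fun i j => if i < n ∧ j < n then Q i j ω else 0) := by
      refine ⟨fun q => if (∀ ℓ, ℓ < n → ∀ ℓ', ℓ' < n → ℓ ≠ ℓ' → q ℓ ℓ' ∈ A) then 1 else 0,
        funext fun ω => ?_⟩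
      have hiff : (∀ ℓ, ℓ < n → ∀ ℓ', ℓ' < n → ℓ ≠ ℓ' →
          (if ℓ < n ∧ ℓ' < n then Q ℓ ℓ' ω else 0) ∈ A) ↔ ω ∈ S n := by
        constructor
        · intro h ℓ hℓ ℓ' hℓ' hne
          have := h ℓ hℓ ℓ' hℓ' hne
          rwa [if_pos ⟨hℓ, hℓ'⟩] at this
        · intro h ℓ hℓ ℓ' hℓ' hne
          rw [if_pos ⟨hℓ, hℓ'⟩]
          exact h ℓ hℓ ℓ' hℓ' hne
      by_cases h : ω ∈ S n
      · rw [hF, Set.indicator_of_mem h]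
        exact (if_pos (hiff.mpr h)).symm
      · rw [hF, Set.indicator_of_notMem h]
        exact (if_neg (fun hc => h (hiff.mp hc))).symm
    have hint : ∫ ω, F ω ∂μ = (μ (S n)).toReal := by
      rw [hF]
      exact integral_indicator_one (hSmeas n)
    -- the cross terms vanish
    have hzero : ∀ ℓ' ℓ : ℕ, ℓ < n → ℓ' < n → ℓ' ≠ ℓ →
        ∫ ω, Set.indicator Aᶜ (fun _ => (1 : ℝ)) (Q ℓ ℓ' ω) * F ω ∂μ = 0 := by
      intro ℓ' ℓ hℓ hℓ' hne
      have : (fun ω => Set.indicator Aᶜ (fun _ => (1 : ℝ)) (Q ℓ ℓ' ω) * F ω)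
          = fun _ => (0 : ℝ) := by
        funext ω
        by_cases h : ω ∈ S n
        · have hmem : Q ℓ ℓ' ω ∈ A := h ℓ hℓ ℓ' hℓ' (fun hc => hne hc.symm)
          rw [Set.indicator_of_notMem (by simpa using hmem), zero_mul]
        · rw [hF, Set.indicator_of_notMem h, mul_zero]
      rw [this, integral_zero]
    -- hence for each ℓ < n the key identity
    have hkey : ∀ ℓ, ℓ < n →
        (μ ((Q ℓ n) ⁻¹' Aᶜ ∩ S n)).toReal
          = (1 / n) * (ρ Aᶜ).toReal * (μ (S n)).toReal := by
      intro ℓ hℓ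
      have hGGn := hGG n (by omega) ℓ hℓ A hA F hFmeas hFbd hFfac
      have hprod : (fun ω => Set.indicator Aᶜ (fun _ => (1 : ℝ)) (Q ℓ n ω) * F ω)
          = Set.indicator ((Q ℓ n) ⁻¹' Aᶜ ∩ S n) (fun _ => (1 : ℝ)) := by
        funext ω
        by_cases h2 : ω ∈ S n
        · by_cases h1 : Q ℓ n ω ∈ Aᶜ
          · rw [Set.indicator_of_mem h1, hF, Set.indicator_of_mem h2, one_mul,
              Set.indicator_of_mem (show ω ∈ Q ℓ n ⁻¹' Aᶜ ∩ S n from ⟨h1, h2⟩)]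
          · rw [Set.indicator_of_notMem h1, zero_mul,
              Set.indicator_of_notMem (fun hc : ω ∈ Q ℓ n ⁻¹' Aᶜ ∩ S n => h1 hc.1)]
        · rw [hF, Set.indicator_of_notMem h2, mul_zero,
            Set.indicator_of_notMem (fun hc : ω ∈ Q ℓ n ⁻¹' Aᶜ ∩ S n => h2 hc.2)]
      have hlhs : ∫ ω, Set.indicator Aᶜ (fun _ => (1 : ℝ)) (Q ℓ n ω) * F ω ∂μ
          = (μ ((Q ℓ n) ⁻¹' Aᶜ ∩ S n)).toReal := by
        rw [hprod]
        exact integral_indicator_one (((hmeas ℓ n) hA.compl).inter (hSmeas n))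
      have hsum : ∑ ℓ' ∈ Finset.range n, (if ℓ' = ℓ then 0 else
          ∫ ω, Set.indicator Aᶜ (fun _ => (1 : ℝ)) (Q ℓ ℓ' ω) * F ω ∂μ) = 0 := by
        refine Finset.sum_eq_zero fun ℓ' hℓ' => ?_
        by_cases h : ℓ' = ℓ
        · simp [h]
        · rw [if_neg h]
          exact hzero ℓ' ℓ hℓ (Finset.mem_range.mp hℓ') h
      rw [hlhs, hint, hsum, mul_zero, add_zero] at hGGn
      exact hGGn
    -- set inclusion
    have hincl : S n ⊆ S (n + 1) ∪ ⋃ ℓ ∈ Finset.range n, ((Q ℓ n) ⁻¹' Aᶜ ∩ S n) := by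
      intro ω hω
      by_cases h : ∀ ℓ, ℓ < n → Q ℓ n ω ∈ A
      · left
        intro ℓ hℓ ℓ' hℓ' hne
        rcases Nat.lt_succ_iff_lt_or_eq.mp hℓ with hℓn | rfl
        · rcases Nat.lt_succ_iff_lt_or_eq.mp hℓ' with hℓ'n | rfl
          · exact hω ℓ hℓn ℓ' hℓ'n hne
          · exact h ℓ hℓn
        · rcases Nat.lt_succ_iff_lt_or_eq.mp hℓ' with hℓ'n | rfl
          · rw [hsymm]; exact h ℓ' hℓ'n
          · exact absurd rfl hne
      · right
        push_neg at h
        obtain ⟨ℓ, hℓ, hmem⟩ := h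
        exact Set.mem_biUnion (Finset.mem_range.mpr hℓ) ⟨hmem, hω⟩
    -- measure bound
    have hmb : μ (S n) ≤ μ (S (n + 1)) + ∑ ℓ ∈ Finset.range n, μ ((Q ℓ n) ⁻¹' Aᶜ ∩ S n) :=
      (measure_mono hincl).trans <| (measure_union_le _ _).trans <|
        add_le_add le_rfl (measure_biUnion_finset_le _ _)
    have hfin : ∀ s : Set Ω, μ s ≠ ⊤ := fun s => measure_ne_top μ s
    have hmb' : (μ (S n)).toReal ≤ (μ (S (n + 1))).toReal
        + ∑ ℓ ∈ Finset.range n, (μ ((Q ℓ n) ⁻¹' Aᶜ ∩ S n)).toReal := by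
      have := ENNReal.toReal_mono (by
        refine ENNReal.add_ne_top.mpr ⟨hfin _, ?_⟩
        exact (ENNReal.sum_lt_top.mpr fun ℓ _ => (hfin _).lt_top).ne) hmb
      rwa [ENNReal.toReal_add (hfin _)
        ((ENNReal.sum_lt_top.mpr fun ℓ _ => (hfin _).lt_top).ne),
        ENNReal.toReal_sum (fun ℓ _ => hfin _)] at this
    have hsumval : ∑ ℓ ∈ Finset.range n, (μ ((Q ℓ n) ⁻¹' Aᶜ ∩ S n)).toReal
        = (ρ Aᶜ).toReal * (μ (S n)).toReal := by
      rw [Finset.sum_congr rfl fun ℓ hℓ => hkey ℓ (Finset.mem_range.mp hℓ)]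
      rw [Finset.sum_const, Finset.card_range, nsmul_eq_mul]
      field_simp
    have hcompl : (ρ Aᶜ).toReal = 1 - (ρ A).toReal := by
      rw [prob_compl_eq_one_sub hA, ENNReal.toReal_sub_of_le prob_le_one (by simp),
        ENNReal.toReal_one]
    rw [hsumval, hcompl] at hmb'
    nlinarith [ENNReal.toReal_nonneg (a := μ (S n))]
  -- final induction
  intro n hn
  have hfinal : ∀ n : ℕ, 2 ≤ n → (ρ A).toReal ^ n ≤ (μ (S n)).toReal := by
    intro n hn
    induction n with
    | zero => omega
    | succ m ih =>
      by_cases hm : 2 ≤ m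
      · calc (ρ A).toReal ^ (m + 1) = (ρ A).toReal * (ρ A).toReal ^ m := by ring
        _ ≤ (ρ A).toReal * (μ (S m)).toReal := by
            exact mul_le_mul_of_nonneg_left (ih hm) ENNReal.toReal_nonneg
        _ ≤ (μ (S (m + 1))).toReal := hstep m hm
      · have hm1 : m = 1 := by omega
        subst hm1
        have hb : μ (S (1 + 1)) = ρ A := hbase
        rw [hb]
        have h1 : (ρ A).toReal ≤ 1 := by
          rw [← ENNReal.toReal_one]
          exact ENNReal.toReal_mono (by simp) prob_le_one
        have hsq : (ρ A).toReal ^ (1 + 1) = (ρ A).toReal * (ρ A).toReal := by ring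
        rw [hsq]
        nlinarith [ENNReal.toReal_nonneg (a := ρ A)]
  have := hfinal n hn
  rw [← ENNReal.toReal_le_toReal (by simp [measure_ne_top]) (measure_ne_top μ _),
    ENNReal.toReal_pow]
  · exact this
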